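/- Fix q_d ∈ S². Let q : (−δ, δ) → S² be a differentiable curve with q(0) = q₀, q′(0) = v, and ⟨q_d, q₀⟩ > −1. Then the derivative at t = 0 of the function t ↦ Ψ(q(t), q_d) equals ⟨e_q(q₀, q_d), v⟩. In particular, the differential of Ψ in its first argument along the tangent space T_{q₀}S² is represented by the vector e_q(q₀, q_d) = (1/(√2·√(1 + ⟨q_d, q₀⟩)))·q₀ × (q₀ × q_d). -/

import Mathlib

open scoped RealInnerProductSpace

/-- Cross product on ℝ³ (as `EuclideanSpace ℝ (Fin 3)`). -/
noncomputable def cross (a b : EuclideanSpace ℝ (Fin 3)) : EuclideanSpace ℝ (Fin 3) :=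
  WithLp.toLp 2 ![a 1 * b 2 - a 2 * b 1, a 2 * b 0 - a 0 * b 2, a 0 * b 1 - a 1 * b 0]

/-- Reduced-attitude error function Ψ(q, q_d) = 2 − √2·√(1 + ⟨q_d, q⟩). -/
noncomputable def Psi (q qd : EuclideanSpace ℝ (Fin 3)) : ℝ :=
  2 - Real.sqrt 2 * Real.sqrt (1 + ⟪qd, q⟫)

/-- Reduced-attitude error vector e_q(q, q_d). -/
noncomputable def eVec (q qd : EuclideanSpace ℝ (Fin 3)) : EuclideanSpace ℝ (Fin 3) :=
  (1 / (Real.sqrt 2 * Real.sqrt (1 + ⟪qd, q⟫))) • cross q (cross q qd)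

lemma inner3 (a b : EuclideanSpace ℝ (Fin 3)) :
    ⟪a, b⟫ = a 0 * b 0 + a 1 * b 1 + a 2 * b 2 := by
  simp [PiLp.inner_apply, Fin.sum_univ_three, RCLike.inner_apply]
  ring

lemma cross_cross_inner (a b c : EuclideanSpace ℝ (Fin 3)) :
    ⟪cross a (cross a b), c⟫ = ⟪a, b⟫ * ⟪a, c⟫ - ⟪a, a⟫ * ⟪b, c⟫ := by
  simp only [inner3, cross]
  simp [Matrix.cons_val_zero, Matrix.cons_val_one]
  ring

/-- The derivative at t = 0 of t ↦ Ψ(q(t), q_d) along a differentiable curve `q` in S²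
through `q₀` with velocity `v` equals ⟨e_q(q₀, q_d), v⟩; that is, the differential of Ψ
in its first argument on T_{q₀}S² is represented by the vector e_q(q₀, q_d). -/
theorem deriv_psi_eq_inner_eVec (qd : EuclideanSpace ℝ (Fin 3)) (hqd : ‖qd‖ = 1)
    (δ : ℝ) (hδ : 0 < δ) (q : ℝ → EuclideanSpace ℝ (Fin 3))
    (hsphere : ∀ t ∈ Set.Ioo (-δ) δ, ‖q t‖ = 1)
    (hdiff : ∀ t ∈ Set.Ioo (-δ) δ, DifferentiableAt ℝ q t)
    (q₀ v : EuclideanSpace ℝ (Fin 3)) (hq0 : q 0 = q₀)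
    (hv : HasDerivAt q v 0) (h : ⟪qd, q₀⟫ > -1) :
    HasDerivAt (fun t => Psi (q t) qd) ⟪eVec q₀ qd, v⟫ 0 := by
  set c : ℝ := ⟪qd, q₀⟫ with hc
  have hpos : (0:ℝ) < 1 + c := by linarith
  have hsq : Real.sqrt (1 + c) ≠ 0 := by positivity
  have h2 : Real.sqrt 2 ≠ 0 := by positivity
  -- orthogonality: ⟪q₀, v⟫ = 0
  have horth : ⟪q₀, v⟫ = 0 := by
    have hg : HasDerivAt (fun t => ⟪q t, q t⟫) (⟪q 0, v⟫ + ⟪v, q 0⟫) 0 := hv.inner ℝ hv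
    rw [hq0] at hg
    have hev : (fun t => ⟪q t, q t⟫) =ᶠ[nhds (0:ℝ)] fun _ => (1:ℝ) := by
      have hmem : Set.Ioo (-δ) δ ∈ nhds (0:ℝ) :=
        Ioo_mem_nhds (by linarith) hδ
      filter_upwards [hmem] with t ht
      have := hsphere t ht
      rw [real_inner_self_eq_norm_sq, this]; norm_num
    have hg' : HasDerivAt (fun t => ⟪q t, q t⟫) 0 0 :=
      (hasDerivAt_const (0:ℝ) (1:ℝ)).congr_of_eventuallyEq hev
    have h0 := hg.unique hg'
    have := real_inner_comm v q₀
    linarith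
  -- derivative of inner part
  have hf : HasDerivAt (fun t => 1 + ⟪qd, q t⟫) ⟪qd, v⟫ 0 := by
    have := ((hasDerivAt_const (0:ℝ) qd).inner ℝ hv).const_add (1:ℝ)
    simpa only [inner_zero_left, zero_add, add_zero] using this
  have hsqrt : HasDerivAt (fun t => Real.sqrt (1 + ⟪qd, q t⟫))
      (⟪qd, v⟫ / (2 * Real.sqrt (1 + c))) 0 := by
    have := hf.sqrt (x := 0) (by rw [hq0, ← hc]; positivity)
    rwa [hq0, ← hc] at this
  have hmain : HasDerivAt (fun t => Psi (q t) qd)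
      (-(Real.sqrt 2 * (⟪qd, v⟫ / (2 * Real.sqrt (1 + c))))) 0 := by
    unfold Psi
    simpa only [zero_sub, Pi.sub_def] using ((hasDerivAt_const (0:ℝ) (2:ℝ)).sub (hsqrt.const_mul (Real.sqrt 2)))
  convert hmain using 1
  -- compute ⟪eVec q₀ qd, v⟫
  have hq0n : ‖q₀‖ = 1 := by rw [← hq0]; exact hsphere 0 ⟨by linarith, hδ⟩
  have hqq : ⟪q₀, q₀⟫ = 1 := by
    rw [real_inner_self_eq_norm_sq, hq0n]; norm_num
  rw [eVec, inner_smul_left, cross_cross_inner, horth, hqq]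
  simp only [starRingEnd_apply, star_trivial, mul_zero, one_mul, zero_sub, mul_neg]
  rw [← hc]
  have h2sq : Real.sqrt 2 * Real.sqrt 2 = 2 := Real.mul_self_sqrt (by norm_num)
  set X := (⟪qd, v⟫ : ℝ) with hX
  field_simp
  linear_combination X * h2sq
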